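/- For the chain model S = γX + ε_S, X = ε_X, Y = αX + ε_Y (diagram S ← X → Y with appropriate equations, or equivalently S ← X and X → Y), with independent centered errors of positive variances, the partial regression coefficient β_{YX·S} = σ_{XY·S}/σ²_{X·S} equals the unconditional regression coefficient β_{YX} = σ_{XY}/σ²_X. -/

import Mathlib

open MeasureTheory ProbabilityTheory

/-- Covariance of two real random variables. -/
noncomputable def cov {Ω : Type*} [MeasurableSpace Ω] (μ : Measure Ω) (X Y : Ω → ℝ) : ℝ :=
  ∫ ω, X ω * Y ω ∂μ - (∫ ω, X ω ∂μ) * (∫ ω, Y ω ∂μ)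

/-- Collapsibility of the regression coefficient over S for the diagram S ← X → Y:
β_{YX·S} = β_{YX}. -/
theorem stmt7 {Ω : Type*} [MeasurableSpace Ω] (μ : Measure Ω) [IsProbabilityMeasure μ]
    (α γ : ℝ) (e : Fin 3 → Ω → ℝ) (X S Y : Ω → ℝ)
    (hmeas : ∀ i, Measurable (e i))
    (hindep : iIndepFun e μ)
    (hL2 : ∀ i, MemLp (e i) 2 μ)
    (hmean : ∀ i, ∫ ω, e i ω ∂μ = 0)
    (hvar : ∀ i, 0 < cov μ (e i) (e i))
    (hX : ∀ ω, X ω = e 0 ω)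
    (hS : ∀ ω, S ω = γ * X ω + e 1 ω)
    (hY : ∀ ω, Y ω = α * X ω + e 2 ω)
    (hpart : 0 < cov μ X X - (cov μ X S) ^ 2 / cov μ S S) :
    (cov μ X Y - cov μ X S * cov μ S Y / cov μ S S)
        / (cov μ X X - (cov μ X S) ^ 2 / cov μ S S)
      = cov μ X Y / cov μ X X := by
  have hint : ∀ i, Integrable (e i) μ := fun i => (hL2 i).integrable one_le_two
  have hmul : ∀ i j, Integrable (fun ω => e i ω * e j ω) μ := by
    intro i j
    have h12 : (1 : ENNReal) / 1 = 1 / 2 + 1 / 2 := by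
      rw [one_div, one_div, ENNReal.inv_two_add_inv_two, inv_one]
    haveI : ENNReal.HolderTriple 2 2 1 := ⟨by rw [ENNReal.inv_two_add_inv_two, inv_one]⟩
    have := ((hL2 j).smul (hL2 i) (p := 2) (q := 2) (r := 1)).integrable le_rfl
    exact (by simpa [smul_eq_mul] using this : Integrable (e i * e j) μ)
  have hcross : ∀ i j, i ≠ j → ∫ ω, e i ω * e j ω ∂μ = 0 := by
    intro i j hij
    have h := (hindep.indepFun hij).integral_mul_eq_mul_integral (hint i).1 (hint j).1
    simp only [Pi.mul_apply] at h
    rw [h, hmean i, zero_mul]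
  obtain rfl : X = e 0 := funext hX
  obtain rfl : S = fun ω => γ * e 0 ω + e 1 ω := funext hS
  obtain rfl : Y = fun ω => α * e 0 ω + e 2 ω := funext hY
  set v0 := ∫ ω, e 0 ω * e 0 ω ∂μ with hv0
  set v1 := ∫ ω, e 1 ω * e 1 ω ∂μ with hv1
  have hc01 := hcross 0 1 (by decide)
  have hc02 := hcross 0 2 (by decide)
  have hc12 := hcross 1 2 (by decide)
  have hv0pos : 0 < v0 := by simpa [cov, hmean 0] using hvar 0
  have hv1pos : 0 < v1 := by simpa [cov, hmean 1] using hvar 1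
  -- a general linear-combination integral lemma
  have key : ∀ a b c d f : ℝ,
      ∫ ω, (a * (e 0 ω * e 0 ω) + b * (e 0 ω * e 1 ω) + c * (e 0 ω * e 2 ω)
        + d * (e 1 ω * e 1 ω) + f * (e 1 ω * e 2 ω)) ∂μ = a * v0 + d * v1 := by
    intro a b c d f
    have I1 : Integrable (fun ω => a * (e 0 ω * e 0 ω)) μ := (hmul 0 0).const_mul a
    have I2 : Integrable (fun ω => b * (e 0 ω * e 1 ω)) μ := (hmul 0 1).const_mul b
    have I3 : Integrable (fun ω => c * (e 0 ω * e 2 ω)) μ := (hmul 0 2).const_mul c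
    have I4 : Integrable (fun ω => d * (e 1 ω * e 1 ω)) μ := (hmul 1 1).const_mul d
    have I5 : Integrable (fun ω => f * (e 1 ω * e 2 ω)) μ := (hmul 1 2).const_mul f
    have I12 : Integrable (fun ω => a * (e 0 ω * e 0 ω) + b * (e 0 ω * e 1 ω)) μ := I1.add I2
    have I123 : Integrable (fun ω => a * (e 0 ω * e 0 ω) + b * (e 0 ω * e 1 ω)
      + c * (e 0 ω * e 2 ω)) μ := I12.add I3
    have I1234 : Integrable (fun ω => a * (e 0 ω * e 0 ω) + b * (e 0 ω * e 1 ω)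
      + c * (e 0 ω * e 2 ω) + d * (e 1 ω * e 1 ω)) μ := I123.add I4
    rw [integral_add I1234 I5, integral_add I123 I4, integral_add I12 I3,
      integral_add I1 I2, integral_const_mul, integral_const_mul, integral_const_mul,
      integral_const_mul, integral_const_mul, hc01, hc02, hc12]
    ring
  have hm0 := hmean 0
  have hm1 := hmean 1
  have hm2 := hmean 2
  have hmS : ∫ ω, (γ * e 0 ω + e 1 ω) ∂μ = 0 := by
    rw [integral_add ((hint 0).const_mul γ) (hint 1), integral_const_mul, hm0, hm1]; ring
  have hmY : ∫ ω, (α * e 0 ω + e 2 ω) ∂μ = 0 := by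
    rw [integral_add ((hint 0).const_mul α) (hint 2), integral_const_mul, hm0, hm2]; ring
  have hXX : cov μ (e 0) (e 0) = v0 := by simp [cov, hm0, hv0]
  have hXS : cov μ (e 0) (fun ω => γ * e 0 ω + e 1 ω) = γ * v0 := by
    simp only [cov, hm0, hmS, mul_zero, zero_mul, sub_zero]
    rw [show (fun ω => e 0 ω * (γ * e 0 ω + e 1 ω))
        = fun ω => (γ * (e 0 ω * e 0 ω) + 1 * (e 0 ω * e 1 ω) + 0 * (e 0 ω * e 2 ω)
          + 0 * (e 1 ω * e 1 ω) + 0 * (e 1 ω * e 2 ω)) from funext fun ω => by ring,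
      key]
    ring
  have hXY : cov μ (e 0) (fun ω => α * e 0 ω + e 2 ω) = α * v0 := by
    simp only [cov, hm0, hmY, mul_zero, zero_mul, sub_zero]
    rw [show (fun ω => e 0 ω * (α * e 0 ω + e 2 ω))
        = fun ω => (α * (e 0 ω * e 0 ω) + 0 * (e 0 ω * e 1 ω) + 1 * (e 0 ω * e 2 ω)
          + 0 * (e 1 ω * e 1 ω) + 0 * (e 1 ω * e 2 ω)) from funext fun ω => by ring,
      key]
    ring
  have hSS : cov μ (fun ω => γ * e 0 ω + e 1 ω) (fun ω => γ * e 0 ω + e 1 ω)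
      = γ ^ 2 * v0 + v1 := by
    simp only [cov, hmS, mul_zero, zero_mul, sub_zero]
    rw [show (fun ω => (γ * e 0 ω + e 1 ω) * (γ * e 0 ω + e 1 ω))
        = fun ω => (γ ^ 2 * (e 0 ω * e 0 ω) + (2 * γ) * (e 0 ω * e 1 ω)
          + 0 * (e 0 ω * e 2 ω) + 1 * (e 1 ω * e 1 ω) + 0 * (e 1 ω * e 2 ω))
        from funext fun ω => by ring, key]
    ring
  have hSY : cov μ (fun ω => γ * e 0 ω + e 1 ω) (fun ω => α * e 0 ω + e 2 ω)
      = γ * α * v0 := by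
    simp only [cov, hmS, hmY, mul_zero, zero_mul, sub_zero]
    rw [show (fun ω => (γ * e 0 ω + e 1 ω) * (α * e 0 ω + e 2 ω))
        = fun ω => ((γ * α) * (e 0 ω * e 0 ω) + α * (e 0 ω * e 1 ω)
          + γ * (e 0 ω * e 2 ω) + 0 * (e 1 ω * e 1 ω) + 1 * (e 1 ω * e 2 ω))
        from funext fun ω => by ring, key]
    ring
  rw [hXX, hXS, hSS] at hpart
  rw [hXX, hXS, hXY, hSS, hSY]
  have hnum : α * v0 - γ * v0 * (γ * α * v0) / (γ ^ 2 * v0 + v1)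
      = α * (v0 - (γ * v0) ^ 2 / (γ ^ 2 * v0 + v1)) := by ring
  rw [hnum, mul_div_assoc, div_self (ne_of_gt hpart), mul_one,
    mul_div_assoc, div_self (ne_of_gt hv0pos), mul_one]
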